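/- Let G = (V, E) be a finite simple graph, let v ∈ V, let k, c ≥ 1 be integers and δ ∈ (0,1). Then the union of all (k, δ, c)-isolated neighborhoods of v in G has size at most k·(c+1)!. In particular, the number of vertices u for which there exists a (k, δ, c)-isolated neighborhood of u containing v is at most k·(c+1)!. -/

import Mathlib

/-- The external neighborhood `N(S)` of a set `S` of vertices: vertices not in `S`
that are adjacent to at least one vertex of `S`. Its cardinality is the cut-size `η(S)`. -/
def cutSet {V : Type} (G : SimpleGraph V) (S : Set V) : Set V :=
  {u | u ∉ S ∧ ∃ w ∈ S, G.Adj w u}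

/-- `S` is a `(k, δ, c)`-isolated neighborhood of `v` in `G`: it contains `v`, induces a
connected subgraph, has size at most `k`, cut-size `η(S) ≤ c`, and vertex conductance
`φ(S) = η(S)/|S| ≤ δ`. -/
def IsIsoNbhd {V : Type} (G : SimpleGraph V) (v : V) (S : Set V) (k δ : ℝ) (c : ℕ) : Prop :=
  v ∈ S ∧ (G.induce S).Connected ∧ (S.ncard : ℝ) ≤ k ∧ (cutSet G S).ncard ≤ c ∧
    ((cutSet G S).ncard : ℝ) / (S.ncard : ℝ) ≤ δ

/- ### Auxiliary development -/

/-- Reachability inside a vertex set `A`. -/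
abbrev ReachIn {V : Type} (G : SimpleGraph V) (A : Set V) (x y : V) : Prop :=
  Relation.ReflTransGen (fun a b => G.Adj a b ∧ a ∈ A ∧ b ∈ A) x y

namespace IsoAux

variable {V : Type} {G : SimpleGraph V}

lemma reachIn_induce_reachable {A : Set V} {x y : V} (h : ReachIn G A x y) :
    ∀ (hx : x ∈ A) (hy : y ∈ A), (G.induce A).Reachable ⟨x, hx⟩ ⟨y, hy⟩ := by
  induction h with
  | refl => intro hx hy; exact SimpleGraph.Reachable.refl _
  | tail h1 h2 ih =>
      intro hx hy
      exact (ih hx h2.2.1).trans (SimpleGraph.Adj.reachable h2.1)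

lemma walk_reachIn {A : Set V} {x y : ↥A} (w : (G.induce A).Walk x y) :
    ReachIn G A x.1 y.1 := by
  induction w with
  | nil => exact Relation.ReflTransGen.refl
  | cons h p ih =>
      exact Relation.ReflTransGen.head ⟨h, Subtype.prop _, Subtype.prop _⟩ ih

lemma connected_reachIn {A : Set V} (h : (G.induce A).Connected) {x y : V}
    (hx : x ∈ A) (hy : y ∈ A) : ReachIn G A x y :=
  (h.preconnected ⟨x, hx⟩ ⟨y, hy⟩).elim fun w => walk_reachIn w

lemma reachIn_shrink {A : Set V} {u : V} :
    ∀ {y}, ReachIn G A u y → ReachIn G {z | z ∈ A ∧ ReachIn G A u z} u y := by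
  intro y h
  induction h with
  | refl => exact Relation.ReflTransGen.refl
  | tail h1 h2 ih =>
      exact ih.tail ⟨h2.1, ⟨h2.2.1, h1⟩, ⟨h2.2.2, h1.tail h2⟩⟩

lemma reachIn_firstCross {A S : Set V} {x y : V} (h : ReachIn G A x y) (hy : y ∈ S) :
    x ∉ S → ∃ a b, ReachIn G (A \ S) x a ∧ G.Adj a b ∧ b ∈ S ∧ b ∈ A ∧ a ∈ A ∧ a ∉ S := by
  induction h using Relation.ReflTransGen.head_induction_on with
  | refl => intro hx; exact absurd hy hx
  | @head p q h' h'' ih =>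
      intro hx
      by_cases hq : q ∈ S
      · exact ⟨p, q, Relation.ReflTransGen.refl, h'.1, hq, h'.2.2, h'.2.1, hx⟩
      · obtain ⟨a, b, hra, hab, hbS, hbA, haA, haS⟩ := ih hq
        exact ⟨a, b, hra.head ⟨h'.1, ⟨h'.2.1, hx⟩, ⟨h'.2.2, hq⟩⟩, hab, hbS, hbA, haA, haS⟩

/-- If `M` is connected, contains `v ∈ T`, and avoids the cut of `T`, then `M ⊆ T`. -/
lemma subset_of_no_cut {M T : Set V} {v : V} (hvM : v ∈ M) (hvT : v ∈ T)
    (hconn : ∀ m ∈ M, ReachIn G M v m)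
    (hdisj : ∀ x ∈ M, x ∉ cutSet G T) : M ⊆ T := by
  intro m hm
  by_contra hmT
  obtain ⟨a, b, hra, hab, hbS, hbM, haM, haS⟩ :=
    reachIn_firstCross (hconn m hm) (show m ∈ Tᶜ from hmT) (show v ∉ Tᶜ from not_not_intro hvT)
  exact hdisj b hbM ⟨hbS, a, not_not.mp haS, hab⟩

/-- The sequence `a c` with `a 0 = 1`, `a (c+1) = 1 + (c+1) a c`; satisfies `a c ≤ (c+1)!`. -/
def acSeq : ℕ → ℕ
  | 0 => 1
  | c + 1 => 1 + (c + 1) * acSeq c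

lemma acSeq_le_factorial (c : ℕ) : acSeq c ≤ (c + 1).factorial := by
  induction c with
  | zero => simp [acSeq]
  | succ c ih =>
      have h1 : 1 ≤ (c + 1).factorial := Nat.factorial_pos (c + 1)
      have h2 : acSeq (c + 1) = 1 + (c + 1) * acSeq c := rfl
      have h3 : (c + 2).factorial = (c + 2) * (c + 1).factorial := rfl
      have h4 : (c + 1) * acSeq c ≤ (c + 1) * (c + 1).factorial :=
        Nat.mul_le_mul_left _ ih
      nlinarith

lemma ncard_finset_biUnion_le [Fintype V] (Bf : Finset V) (f : V → Set V) (K : ℕ)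
    (h : ∀ w ∈ Bf, (f w).ncard ≤ K) :
    (⋃ w ∈ (Bf : Set V), f w).ncard ≤ Bf.card * K := by
  classical
  induction Bf using Finset.induction_on with
  | empty => simp
  | @insert a s ha ih =>
      have hcoe : ((insert a s : Finset V) : Set V) = insert a (s : Set V) := by simp
      rw [hcoe, Set.biUnion_insert]
      have h1 : (f a ∪ ⋃ w ∈ (s : Set V), f w).ncard ≤
          (f a).ncard + (⋃ w ∈ (s : Set V), f w).ncard := Set.ncard_union_le _ _
      have h2 := ih (fun w hw => h w (Finset.mem_insert_of_mem hw))
      have h3 := h a (Finset.mem_insert_self a s)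
      have hcard : (insert a s).card = s.card + 1 := Finset.card_insert_of_notMem ha
      rw [hcard]
      calc (f a ∪ ⋃ w ∈ (s : Set V), f w).ncard
          ≤ (f a).ncard + (⋃ w ∈ (s : Set V), f w).ncard := h1
        _ ≤ K + s.card * K := Nat.add_le_add h3 h2
        _ = (s.card + 1) * K := by ring

/-- Key lemma: union of all connected sets `S ∋ v` avoiding `F`, of size `≤ k`, with
at most `c` boundary vertices outside `F`, has size at most `k * acSeq c`. -/
theorem keyLemma {V : Type} [Fintype V] (G : SimpleGraph V) (k : ℕ) :
    ∀ (c : ℕ) (F : Set V) (v : V),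
      (⋃₀ {S : Set V | v ∈ S ∧ S ∩ F = ∅ ∧ (G.induce S).Connected ∧
        S.ncard ≤ k ∧ ((cutSet G S) \ F).ncard ≤ c}).ncard ≤ k * acSeq c := by
  classical
  intro c
  induction c with
  | zero =>
      intro F v
      rcases Set.eq_empty_or_nonempty {S : Set V | v ∈ S ∧ S ∩ F = ∅ ∧ (G.induce S).Connected ∧
        S.ncard ≤ k ∧ ((cutSet G S) \ F).ncard ≤ 0} with hA | ⟨S₀, hS₀⟩
      · rw [hA]; simp
      · obtain ⟨hvS₀, hS₀F, hS₀conn, hS₀k, hS₀cut⟩ := hS₀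
        have hcutsub : cutSet G S₀ ⊆ F := by
          have hemp : (cutSet G S₀) \ F = ∅ :=
            (Set.ncard_eq_zero (Set.toFinite _)).mp (Nat.le_zero.mp hS₀cut)
          intro x hx
          by_contra hxF
          exact absurd (Set.mem_diff_of_mem hx hxF) (hemp ▸ Set.notMem_empty x)
        have hsub : (⋃₀ {S : Set V | v ∈ S ∧ S ∩ F = ∅ ∧ (G.induce S).Connected ∧
            S.ncard ≤ k ∧ ((cutSet G S) \ F).ncard ≤ 0}) ⊆ S₀ := by
          rintro x ⟨S, ⟨hvS, hSF, hSconn, hSk, hScut⟩, hxS⟩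
          have : S ⊆ S₀ := by
            refine subset_of_no_cut hvS hvS₀ (fun m hm => connected_reachIn hSconn hvS hm) ?_
            intro x hxSmem hxcut
            exact (Set.eq_empty_iff_forall_notMem.mp hSF x) ⟨hxSmem, hcutsub hxcut⟩
          exact this hxS
        calc _ ≤ S₀.ncard := Set.ncard_le_ncard hsub (Set.toFinite _)
          _ ≤ k := hS₀k
          _ = k * acSeq 0 := by simp [acSeq]
  | succ c ih =>
      intro F v
      set 𝒜 := {S : Set V | v ∈ S ∧ S ∩ F = ∅ ∧ (G.induce S).Connected ∧
        S.ncard ≤ k ∧ ((cutSet G S) \ F).ncard ≤ c + 1} with h𝒜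
      rcases Set.eq_empty_or_nonempty 𝒜 with hA | hne
      · rw [hA]; simp
      obtain ⟨M, hM, hmax⟩ := Set.Finite.exists_maximalFor Set.ncard 𝒜 (Set.toFinite _) hne
      obtain ⟨hvM, hMF, hMconn, hMk, hMcut⟩ := hM
      set B := cutSet G M \ F with hB
      set Ufun := fun w => ⋃₀ {S : Set V | w ∈ S ∧ S ∩ (F ∪ M) = ∅ ∧ (G.induce S).Connected ∧
        S.ncard ≤ k ∧ ((cutSet G S) \ (F ∪ M)).ncard ≤ c} with hUfun
      have hUw : ∀ w, (Ufun w).ncard ≤ k * acSeq c := fun w => ih (F ∪ M) w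
      have hcover : ⋃₀ 𝒜 ⊆ M ∪ ⋃ w ∈ B, Ufun w := by
        rintro u ⟨T, hT, huT⟩
        by_cases huM : u ∈ M
        · exact Set.mem_union_left _ huM
        obtain ⟨hvT, hTF, hTconn, hTk, hTcut⟩ := hT
        -- some boundary vertex of T lies in M
        have hMT : ¬ (∀ x ∈ M, x ∉ cutSet G T) := by
          intro hno
          have hMsubT : M ⊆ T :=
            subset_of_no_cut hvM hvT (fun m hm => connected_reachIn hMconn hvM hm) hno
          have h1 : M.ncard ≤ T.ncard := Set.ncard_le_ncard hMsubT (Set.toFinite _)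
          have h2 : M.ncard = T.ncard := le_antisymm h1 (hmax ⟨hvT, hTF, hTconn, hTk, hTcut⟩ h1)
          have hMeqT : M = T := Set.eq_of_subset_of_ncard_le hMsubT (le_of_eq h2.symm)
            (Set.toFinite _)
          exact huM (hMeqT ▸ huT)
        push_neg at hMT
        obtain ⟨b, hbM, hbCut⟩ := hMT
        have hbF : b ∉ F := fun hbF =>
          (Set.eq_empty_iff_forall_notMem.mp hMF b) ⟨hbM, hbF⟩
        have hbD : b ∈ cutSet G T \ F := ⟨hbCut, hbF⟩
        have hDM : ((cutSet G T \ F) \ M).ncard ≤ c := by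
          have h1 : (cutSet G T \ F) \ M ⊆ (cutSet G T \ F) \ {b} :=
            Set.diff_subset_diff_right (Set.singleton_subset_iff.mpr hbM)
          have h2 : ((cutSet G T \ F) \ {b}).ncard < (cutSet G T \ F).ncard :=
            Set.ncard_diff_singleton_lt_of_mem hbD (Set.toFinite _)
          have h3 : ((cutSet G T \ F) \ M).ncard ≤ ((cutSet G T \ F) \ {b}).ncard :=
            Set.ncard_le_ncard h1 (Set.toFinite _)
          omega
        -- the reach-component P of u in T \ M
        set A := T \ M with hA'
        have huA : u ∈ A := ⟨huT, huM⟩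
        set P := {z | z ∈ A ∧ ReachIn G A u z} with hP
        have hPsubA : P ⊆ A := fun z hz => hz.1
        have huP : u ∈ P := ⟨huA, Relation.ReflTransGen.refl⟩
        -- find the attachment vertex a ∈ P adjacent to M
        obtain ⟨a, bb, hra, hab, hbbM, hbbT, haT, haM⟩ :=
          reachIn_firstCross (connected_reachIn hTconn huT hvT) hvM huM
        have haP : a ∈ P := ⟨⟨haT, haM⟩, hra⟩
        have haF : a ∉ F := fun haF =>
          (Set.eq_empty_iff_forall_notMem.mp hTF a) ⟨haT, haF⟩
        have haB : a ∈ B := ⟨⟨haM, bb, hbbM, hab.symm⟩, haF⟩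
        -- P is a member of the (c, F ∪ M)-family at a
        have hPconn : (G.induce P).Connected := by
          rw [SimpleGraph.connected_iff]
          constructor
          · rintro ⟨p, hp⟩ ⟨q, hq⟩
            have h1 := reachIn_induce_reachable (reachIn_shrink hp.2) huP hp
            have h2 := reachIn_induce_reachable (reachIn_shrink hq.2) huP hq
            exact h1.symm.trans h2
          · exact ⟨⟨u, huP⟩⟩
        have hPFM : P ∩ (F ∪ M) = ∅ := by
          ext z
          simp only [Set.mem_inter_iff, Set.mem_union, Set.mem_empty_iff_false, iff_false,
            not_and, not_or]
          intro hz
          have hzA := hPsubA hz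
          exact ⟨fun hzF => (Set.eq_empty_iff_forall_notMem.mp hTF z) ⟨hzA.1, hzF⟩, hzA.2⟩
        have hPk : P.ncard ≤ k :=
          le_trans (Set.ncard_le_ncard (fun z hz => (hPsubA hz).1) (Set.toFinite _)) hTk
        have hPcut : ((cutSet G P) \ (F ∪ M)).ncard ≤ c := by
          refine le_trans (Set.ncard_le_ncard ?_ (Set.toFinite _)) hDM
          rintro x ⟨⟨hxP, y, hyP, hadj⟩, hxFM⟩
          have hxF : x ∉ F := fun h => hxFM (Or.inl h)
          have hxM : x ∉ M := fun h => hxFM (Or.inr h)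
          have hxT : x ∉ T := by
            intro hxT
            have hxA : x ∈ A := ⟨hxT, hxM⟩
            exact hxP ⟨hxA, hyP.2.tail ⟨hadj, hyP.1, hxA⟩⟩
          exact ⟨⟨⟨hxT, y, (hPsubA hyP).1, hadj⟩, hxF⟩, hxM⟩
        have huUf : u ∈ Ufun a := ⟨P, ⟨haP, hPFM, hPconn, hPk, hPcut⟩, huP⟩
        exact Set.mem_union_right _ (Set.mem_biUnion haB huUf)
      -- counting
      have hBfin : B.Finite := Set.toFinite _
      have hBcoe : (hBfin.toFinset : Set V) = B := hBfin.coe_toFinset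
      have h3 : (⋃ w ∈ B, Ufun w).ncard ≤ hBfin.toFinset.card * (k * acSeq c) := by
        have h4 := ncard_finset_biUnion_le hBfin.toFinset Ufun (k * acSeq c) (fun w _ => hUw w)
        rw [hBcoe] at h4
        exact h4
      have hBcard : hBfin.toFinset.card = B.ncard := (Set.ncard_eq_toFinset_card _ _).symm
      have hBle : B.ncard ≤ c + 1 := hMcut
      calc (⋃₀ 𝒜).ncard ≤ (M ∪ ⋃ w ∈ B, Ufun w).ncard :=
            Set.ncard_le_ncard hcover (Set.toFinite _)
        _ ≤ M.ncard + (⋃ w ∈ B, Ufun w).ncard := Set.ncard_union_le _ _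
        _ ≤ k + (c + 1) * (k * acSeq c) := by
            refine Nat.add_le_add hMk ?_
            refine le_trans h3 ?_
            rw [hBcard]
            exact Nat.mul_le_mul_right _ hBle
        _ = k * acSeq (c + 1) := by
            have : acSeq (c + 1) = 1 + (c + 1) * acSeq c := rfl
            rw [this]; ring

end IsoAux

/-- Corollary 9 of the paper: the union of all `(k, δ, c)`-isolated
neighborhoods of a vertex `v` has size at most `k·(c+1)!`; in particular, at most
`k·(c+1)!` vertices `u` admit a `(k, δ, c)`-isolated neighborhood containing `v`. -/
theorem union_of_isolated_neighborhoods_small {V : Type} [Fintype V]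
    (G : SimpleGraph V) (v : V) (k c : ℕ) (hk : 1 ≤ k) (hc : 1 ≤ c)
    (δ : ℝ) (hδ : δ ∈ Set.Ioo (0 : ℝ) 1) :
    (⋃₀ {S : Set V | IsIsoNbhd G v S (k : ℝ) δ c}).ncard ≤ k * (c + 1).factorial ∧
    {u : V | ∃ S : Set V, IsIsoNbhd G u S (k : ℝ) δ c ∧ v ∈ S}.ncard ≤
      k * (c + 1).factorial := by
  classical
  have key := IsoAux.keyLemma G k c ∅ v
  have hfin : k * IsoAux.acSeq c ≤ k * (c + 1).factorial :=
    Nat.mul_le_mul_left k (IsoAux.acSeq_le_factorial c)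
  have hmem : ∀ (u : V) (S : Set V), IsIsoNbhd G u S (k : ℝ) δ c → v ∈ S →
      S ∈ {S : Set V | v ∈ S ∧ S ∩ (∅ : Set V) = ∅ ∧ (G.induce S).Connected ∧
        S.ncard ≤ k ∧ ((cutSet G S) \ (∅ : Set V)).ncard ≤ c} := by
    rintro u S ⟨huS, hconn, hk', hcut, _⟩ hvS
    refine ⟨hvS, by simp, hconn, ?_, by simpa using hcut⟩
    exact_mod_cast hk'
  constructor
  · refine le_trans (le_trans (Set.ncard_le_ncard ?_ (Set.toFinite _)) key) hfin
    apply Set.sUnion_subset_sUnion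
    intro S hS
    exact hmem v S hS hS.1
  · refine le_trans (le_trans (Set.ncard_le_ncard ?_ (Set.toFinite _)) key) hfin
    rintro u ⟨S, hS, hvS⟩
    exact ⟨S, hmem u S hS hvS, hS.1⟩
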